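/- Extra variables destroy safe-extension invariance (Example 2, first part): with FS = {f/1, g/1}, CS = {0/0, 1/0} and the program P = { f X → Y X } (note the extra variable Y in the right-hand side), one has ⟦f 0⟧^P = {⊥} = ⟦f 1⟧^P. -/

import Mathlib

/-- A signature: function symbols and constructor symbols, each with an arity. -/
structure Sig where
  FS : Type
  CS : Type
  arityF : FS → ℕ
  arityC : CS → ℕ

/-- Applicative partial expressions over a signature.  Variables are natural
numbers and `bot` is the distinguished 0-ary constructor `⊥`. -/
inductive Exp (σ : Sig) : Type where
  | var : ℕ → Exp σ
  | fn : σ.FS → Exp σ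
  | cn : σ.CS → Exp σ
  | bot : Exp σ
  | app : Exp σ → Exp σ → Exp σ

variable {σ : Sig}

/-- `applyList e [e1, …, en]` is the curried application `e e1 … en`. -/
def applyList (e : Exp σ) (es : List (Exp σ)) : Exp σ := es.foldl Exp.app e

/-- Partial patterns `Pat_⊥`. -/
inductive IsPPat : Exp σ → Prop where
  | var (x : ℕ) : IsPPat (Exp.var x)
  | bot : IsPPat (Exp.bot : Exp σ)
  | capp (c : σ.CS) (ts : List (Exp σ)) (har : ts.length ≤ σ.arityC c)
      (hts : ∀ t ∈ ts, IsPPat t) : IsPPat (applyList (Exp.cn c) ts)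
  | fapp (f : σ.FS) (ts : List (Exp σ)) (har : ts.length < σ.arityF f)
      (hts : ∀ t ∈ ts, IsPPat t) : IsPPat (applyList (Exp.fn f) ts)

/-- The constructor `⊥` does not occur in the expression. -/
def BotFree : Exp σ → Prop
  | .bot => False
  | .app a b => BotFree a ∧ BotFree b
  | _ => True

/-- Total patterns `Pat`. -/
def IsPat (t : Exp σ) : Prop := IsPPat t ∧ BotFree t

/-- First-order patterns `FOPat`. -/
inductive IsFOPat : Exp σ → Prop where
  | var (x : ℕ) : IsFOPat (Exp.var x)
  | capp (c : σ.CS) (ts : List (Exp σ)) (har : ts.length = σ.arityC c)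
      (hts : ∀ t ∈ ts, IsFOPat t) : IsFOPat (applyList (Exp.cn c) ts)

/-- The list of occurrences of variables in an expression. -/
def occVars : Exp σ → List ℕ
  | .var x => [x]
  | .app a b => occVars a ++ occVars b
  | _ => []

/-- Applying a substitution to an expression. -/
def subst (θ : ℕ → Exp σ) : Exp σ → Exp σ
  | .var x => θ x
  | .fn f => .fn f
  | .cn c => .cn c
  | .bot => .bot
  | .app a b => .app (subst θ a) (subst θ b)

/-- Partial-pattern substitutions `PSubst_⊥`. -/
def PSub (θ : ℕ → Exp σ) : Prop := ∀ x, IsPPat (θ x)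

/-- A program rule `f t1 … tn → r` (the left-hand side is `f` applied to `lhs`). -/
structure Rule (σ : Sig) where
  fn : σ.FS
  lhs : List (Exp σ)
  rhs : Exp σ

/-- Well-formedness of a rule: `f` is applied to as many arguments as its arity,
the arguments form a linear tuple of total patterns. -/
def Rule.WF (r : Rule σ) : Prop :=
  r.lhs.length = σ.arityF r.fn ∧ (∀ t ∈ r.lhs, IsPat t) ∧
    (r.lhs.flatMap occVars).Nodup

/-- The rule has no extra variables: all variables of the right-hand side occur
in the left-hand side. -/
def Rule.NoExtra (r : Rule σ) : Prop :=
  ∀ x ∈ occVars r.rhs, x ∈ r.lhs.flatMap occVars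

abbrev Program (σ : Sig) := Set (Rule σ)

/-- A program without extra variables, all whose rules are well formed. -/
def WFProg (P : Program σ) : Prop := ∀ r ∈ P, r.WF ∧ r.NoExtra

/-- `h ∈ Σ` (a function symbol, a constructor symbol, or `⊥`). -/
def IsSymb : Exp σ → Prop
  | .fn _ => True
  | .cn _ => True
  | .bot => True
  | _ => False

/-- HOCRWL derivation trees for statements `e ⇒ t`, with rules
(B), (RR), (DC) and (OR). -/
inductive DTree (P : Program σ) : Exp σ → Exp σ → Type where
  | bot (e : Exp σ) : DTree P e Exp.bot
  | rr (x : ℕ) : DTree P (Exp.var x) (Exp.var x)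
  | dc (h : Exp σ) (es ts : List (Exp σ)) (hsym : IsSymb h)
      (hlen : es.length = ts.length) (hpat : IsPPat (applyList h ts))
      (ds : ∀ p ∈ es.zip ts, DTree P p.1 p.2) :
      DTree P (applyList h es) (applyList h ts)
  | opr (r : Rule σ) (hr : r ∈ P) (θ : ℕ → Exp σ) (hθ : PSub θ)
      (es as : List (Exp σ)) (t : Exp σ) (hlen : es.length = r.lhs.length)
      (ds : ∀ p ∈ es.zip (r.lhs.map (subst θ)), DTree P p.1 p.2)
      (d : DTree P (applyList (subst θ r.rhs) as) t) :
      DTree P (applyList (Exp.fn r.fn) (es ++ as)) t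

/-- `P ⊢ e ⇒ t` is derivable in the HOCRWL proof calculus. -/
def Deriv (P : Program σ) (e t : Exp σ) : Prop := Nonempty (DTree P e t)

/-- The HOCRWL denotation `⟦e⟧^P = { t ∈ Pat_⊥ | P ⊢ e ⇒ t }`. -/
def den (P : Program σ) (e : Exp σ) : Set (Exp σ) := {t | IsPPat t ∧ Deriv P e t}

/-- Observations: total patterns in the denotation. -/
def Obs (P : Program σ) (e : Exp σ) : Set (Exp σ) := {t | t ∈ den P e ∧ BotFree t}

/-- First-order observations: first-order patterns in the denotation. -/
def ObsFO (P : Program σ) (e : Exp σ) : Set (Exp σ) := {t | t ∈ den P e ∧ IsFOPat t}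

/-- Contexts `C ::= [ ] | C e | e C`. -/
inductive Cntxt (σ : Sig) : Type where
  | hole : Cntxt σ
  | appL : Cntxt σ → Exp σ → Cntxt σ
  | appR : Exp σ → Cntxt σ → Cntxt σ

/-- Filling the hole of a context with an expression. -/
def Cntxt.fill : Cntxt σ → Exp σ → Exp σ
  | .hole, e => e
  | .appL C e', e => .app (C.fill e) e'
  | .appR e' C, e => .app e' (C.fill e)

/-- Function symbols occurring in an expression. -/
def expFS : Exp σ → Set σ.FS
  | .fn f => {f}
  | .app a b => expFS a ∪ expFS b
  | _ => ∅

/-- Function symbols occurring in a rule. -/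
def ruleFS (r : Rule σ) : Set σ.FS :=
  insert r.fn ((⋃ t ∈ r.lhs, expFS t) ∪ expFS r.rhs)

/-- Function symbols occurring in a program. -/
def progFS (P : Program σ) : Set σ.FS := ⋃ r ∈ P, ruleFS r

/-- Function symbols defined by a program (roots of left-hand sides). -/
def defs (P : Program σ) : Set σ.FS := Rule.fn '' P

/-- `P'` is a safe extension of `(P, e)`: `P' = P ⊎ P''` where `P''` defines no
function symbol occurring in `P` or in `e`. -/
def SafeExt (P P' : Program σ) (e : Exp σ) : Prop :=
  ∃ P'' : Program σ, P' = P ∪ P'' ∧ Disjoint P P'' ∧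
    Disjoint (defs P'') (expFS e ∪ progFS P)

/-- `e ∼ₙ e'` : `n`-extensional equivalence. -/
def ExtEquiv (P : Program σ) (n : ℕ) (e e' : Exp σ) : Prop :=
  ∀ es : List (Exp σ), es.length = n →
    den P (applyList e es) = den P (applyList e' es)

/-- Function symbols of the Example 2 program: `f/1`, `g/1`. -/
inductive Ex2F where | f | g

/-- Constructor symbols of the Example 2 program: `0/0`, `1/0`. -/
inductive Ex2C where | c0 | c1

/-- The signature of the Example 2 program. -/
def ex2Sig : Sig where
  FS := Ex2F
  CS := Ex2C
  arityF := fun s => match s with | .f => 1 | .g => 1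
  arityC := fun s => match s with | .c0 => 0 | .c1 => 0

/-- The Example 2 program `P = { f X → Y X }` (extra variable `Y`). -/
def ex2Prog : Program ex2Sig :=
  {⟨.f, [.var 0], .app (.var 1) (.var 0)⟩}

/-- Auxiliary: the expression is an application. -/
def IsAppE : Exp σ → Prop
  | .app _ _ => True
  | _ => False

lemma applyList_cons (e a : Exp σ) (l : List (Exp σ)) :
    applyList e (a :: l) = applyList (.app e a) l := rfl

lemma applyList_nil (e : Exp σ) : applyList e [] = e := rfl

lemma isAppE_applyList {e : Exp σ} (h : IsAppE e) (l : List (Exp σ)) :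
    IsAppE (applyList e l) := by
  induction l generalizing e with
  | nil => exact h
  | cons a l ih => rw [applyList_cons]; exact ih (show IsAppE (Exp.app e a) from trivial)

lemma isAppE_applyList_ne_nil (h : Exp σ) {l : List (Exp σ)} (hl : l ≠ []) :
    IsAppE (applyList h l) := by
  cases l with
  | nil => exact absurd rfl hl
  | cons a l => rw [applyList_cons]; exact isAppE_applyList (show IsAppE (Exp.app h a) from trivial) l

/-- Spine head. -/
def headOf : Exp σ → Exp σ
  | .app a _ => headOf a
  | e => e

/-- Spine arguments. -/
def argsOf : Exp σ → List (Exp σ)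
  | .app a b => argsOf a ++ [b]
  | _ => []

lemma headOf_applyList (e : Exp σ) (l : List (Exp σ)) :
    headOf (applyList e l) = headOf e := by
  induction l generalizing e with
  | nil => rfl
  | cons a l ih => rw [applyList_cons, ih]; rfl

lemma argsOf_applyList (e : Exp σ) (l : List (Exp σ)) :
    argsOf (applyList e l) = argsOf e ++ l := by
  induction l generalizing e with
  | nil => simp [applyList_nil]
  | cons a l ih =>
      rw [applyList_cons, ih]
      show argsOf e ++ [a] ++ l = argsOf e ++ (a :: l)
      simp

lemma headOf_atom {e : Exp σ} (h : ¬ IsAppE e) : headOf e = e := by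
  cases e <;> first | rfl | exact absurd trivial h

lemma argsOf_atom {e : Exp σ} (h : ¬ IsAppE e) : argsOf e = [] := by
  cases e <;> first | rfl | exact absurd trivial h

lemma applyList_atom_inj {h h' : Exp σ} (hh : ¬ IsAppE h) (hh' : ¬ IsAppE h')
    {l l' : List (Exp σ)} (e : applyList h l = applyList h' l') :
    h = h' ∧ l = l' := by
  constructor
  · have := congrArg headOf e
    rwa [headOf_applyList, headOf_applyList, headOf_atom hh, headOf_atom hh'] at this
  · have := congrArg argsOf e
    rw [argsOf_applyList, argsOf_applyList, argsOf_atom hh, argsOf_atom hh'] at this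
    simpa using this

lemma symb_not_app {h : Exp σ} (hs : IsSymb h) : ¬ IsAppE h := by
  cases h <;> first | exact fun x => x | exact absurd hs (fun x => x)

lemma ex2_no_ppat {h : Exp ex2Sig} (hs : IsSymb h) {ts : List (Exp ex2Sig)}
    (hts : ts ≠ []) : ¬ IsPPat (applyList h ts) := by
  intro hp
  have happ : IsAppE (applyList h ts) := isAppE_applyList_ne_nil h hts
  generalize he : applyList h ts = u at hp happ
  cases hp with
  | var x => exact happ
  | bot => exact happ
  | capp c ts' har hts' =>
      obtain ⟨h1, h2⟩ := applyList_atom_inj (symb_not_app hs)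
        (show ¬ IsAppE (Exp.cn c) from fun x => x) he
      subst h2
      cases c <;> simp [ex2Sig] at har <;> exact hts (List.length_eq_zero_iff.mp har)
  | fapp f ts' har hts' =>
      obtain ⟨h1, h2⟩ := applyList_atom_inj (symb_not_app hs)
        (show ¬ IsAppE (Exp.fn f) from fun x => x) he
      subst h2
      cases f <;> simp [ex2Sig, Nat.lt_one_iff] at har <;> exact hts (List.length_eq_zero_iff.mp har)

lemma ex2_main {e t : Exp ex2Sig} (d : DTree ex2Prog e t) (he : IsAppE e) :
    t = .bot := by
  induction d with
  | bot e => rfl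
  | rr x => exact he.elim
  | dc h es ts hsym hlen hpat ds ih =>
      cases es with
      | nil =>
          cases ts with
          | nil => exact absurd he (symb_not_app hsym)
          | cons a l => simp at hlen
      | cons a l =>
          have hts : ts ≠ [] := by
            intro h'; subst h'; simp at hlen
          exact absurd hpat (ex2_no_ppat hsym hts)
  | opr r hr θ hθ es as t hlen ds d ihds ihd =>
      have hrr : r = ⟨.f, [.var 0], .app (.var 1) (.var 0)⟩ := hr
      apply ihd
      rw [hrr]
      exact isAppE_applyList (by simp [subst, IsAppE]) as

/-- **Example 2, first part**: with `P = { f X → Y X }` (extra variable `Y`),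
`⟦f 0⟧^P = {⊥} = ⟦f 1⟧^P`. -/
theorem ex2_den_bot :
    den ex2Prog (.app (.fn .f) (.cn .c0)) = {Exp.bot} ∧
    den ex2Prog (.app (.fn .f) (.cn .c1)) = {Exp.bot} := by
  constructor <;>
  · ext t
    constructor
    · rintro ⟨_, ⟨d⟩⟩
      exact ex2_main d trivial
    · rintro rfl
      exact ⟨IsPPat.bot, ⟨DTree.bot _⟩⟩
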